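/- Assume the minimal data collection condition, that |q^π(s,a)| ≤ V̄ for all (s,a), and let λ > 0. For i = 1,…,n define c̃_i := r_i + γ·q^π(s'_i,π) − q^π(s_i,a_i) and ĉ_i := r(s_i,a_i) + γ·(P^π q^π)(s_i,a_i) − q^π(s_i,a_i); let τ̃*_i := max(0, (G')⁻¹(c̃_i/λ)) and τ*_i := max(0, (G')⁻¹(ĉ_i/λ)); and set Γ̃_i := (τ̃*_i·c̃_i − λ·G(τ̃*_i))/(1−γ), Γ^pseudo_i := (τ*_i·ĉ_i − λ·G(τ*_i))/(1−γ), and Δ_i := Γ^pseudo_i − Γ̃_i. Then for each i, E[Δ_i | F_i] ≤ 0 almost surely; moreover ĉ_i = 0 and Γ^pseudo_i = 0 by the Bellman equation. (Lemma 4.1, supermartingale difference property.) -/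

import Mathlib

open MeasureTheory ProbabilityTheory

/-- `q(s,π) := ∫_A q(s,a) π(da|s)`. -/
noncomputable def actInt {S A : Type*} [MeasurableSpace S] [MeasurableSpace A]
    (π : Kernel S A) (q : S × A → ℝ) (s : S) : ℝ :=
  ∫ a, q (s, a) ∂(π s)

/-- `(P^π q)(s,a) := ∫_S q(s',π) P(ds'|s,a)`. -/
noncomputable def bellOp {S A : Type*} [MeasurableSpace S] [MeasurableSpace A]
    (P : Kernel (S × A) S) (π : Kernel S A) (q : S × A → ℝ) (sa : S × A) : ℝ :=
  ∫ s', actInt π q s' ∂(P sa)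

/-- Lemma 4.1, supermartingale difference property. -/
theorem stmt_12
    {S A Ω₀ : Type*} [MeasurableSpace S] [MeasurableSpace A] [mΩ : MeasurableSpace Ω₀]
    (Pr : Measure Ω₀) [IsProbabilityMeasure Pr]
    (γ : ℝ) (hγ0 : 0 ≤ γ) (hγ1 : γ < 1)
    (r : S × A → ℝ) (hr_meas : Measurable r) (Br : ℝ) (hr_bdd : ∀ x, |r x| ≤ Br)
    (P : Kernel (S × A) S) [IsMarkovKernel P]
    (π : Kernel S A) [IsMarkovKernel π]
    (V : ℝ) (hV : 0 < V)
    (qpi : S × A → ℝ) (hq_meas : Measurable qpi) (hq_bdd : ∀ x, |qpi x| ≤ V)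
    (hBellman : ∀ x, qpi x = r x + γ * bellOp P π qpi x)
    (G : ℝ → ℝ) (M : ℝ) (hM : 0 < M)
    (hG_diff : Differentiable ℝ G)
    (hG_conv : ConvexOn ℝ Set.univ (fun x => G x - M / 2 * x ^ 2))
    (hG_nonneg : ∀ x, 0 ≤ G x) (hG_one : G 1 = 0)
    (lam : ℝ) (hlam : 0 < lam)
    (n : ℕ)
    (sa : Fin n → Ω₀ → S × A) (rew : Fin n → Ω₀ → ℝ) (s' : Fin n → Ω₀ → S)
    (ℱ : Fin n → MeasurableSpace Ω₀) (hℱ : ∀ i, ℱ i ≤ mΩ)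
    (hsa_meas : ∀ i, Measurable[ℱ i] (sa i))
    (hrew_meas : ∀ i, Measurable (rew i)) (hs'_meas : ∀ i, Measurable (s' i))
    -- minimal data collection condition:
    (hrew : ∀ i, ∀ᵐ ω ∂Pr, rew i ω = r (sa i ω))
    (hcond : ∀ i, ∀ f : S → ℝ, Measurable f → (∃ Bf, ∀ x, |f x| ≤ Bf) →
      (Pr[fun ω => f (s' i ω)|ℱ i]) =ᵐ[Pr] fun ω => ∫ x, f x ∂(P (sa i ω))) :
    -- c̃ᵢ := rᵢ + γ q^π(s'ᵢ,π) − q^π(sᵢ,aᵢ)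
    let ctil : Fin n → Ω₀ → ℝ := fun i ω =>
      rew i ω + γ * actInt π qpi (s' i ω) - qpi (sa i ω)
    -- ĉᵢ := r(sᵢ,aᵢ) + γ (P^π q^π)(sᵢ,aᵢ) − q^π(sᵢ,aᵢ)
    let chat : Fin n → Ω₀ → ℝ := fun i ω =>
      r (sa i ω) + γ * bellOp P π qpi (sa i ω) - qpi (sa i ω)
    -- τ̃*ᵢ := max(0, (G')⁻¹(c̃ᵢ/λ)) and τ*ᵢ := max(0, (G')⁻¹(ĉᵢ/λ))
    let tautil : Fin n → Ω₀ → ℝ := fun i ω =>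
      max 0 (Function.invFun (deriv G) (ctil i ω / lam))
    let taustar : Fin n → Ω₀ → ℝ := fun i ω =>
      max 0 (Function.invFun (deriv G) (chat i ω / lam))
    -- Γ̃ᵢ and Γ^pseudoᵢ
    let Gamtil : Fin n → Ω₀ → ℝ := fun i ω =>
      (tautil i ω * ctil i ω - lam * G (tautil i ω)) / (1 - γ)
    let Gamps : Fin n → Ω₀ → ℝ := fun i ω =>
      (taustar i ω * chat i ω - lam * G (taustar i ω)) / (1 - γ)
    (∀ i ω, chat i ω = 0)
      ∧ (∀ i ω, Gamps i ω = 0)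
      ∧ (∀ i : Fin n, ∀ᵐ ω ∂Pr,
          (Pr[fun ω' => Gamps i ω' - Gamtil i ω'|ℱ i]) ω ≤ 0) := by

  intro ctil chat tautil taustar Gamtil Gamps
  -- Convexity of G
  have hGconv : ConvexOn ℝ Set.univ G := by
    have h2 : ConvexOn ℝ Set.univ (fun x : ℝ => M / 2 * x ^ 2) := by
      have := (Even.convexOn_pow (even_two) : ConvexOn ℝ Set.univ fun x : ℝ => x ^ 2).smul
        (by positivity : (0:ℝ) ≤ M / 2)
      simpa [smul_eq_mul] using this
    have h3 := hG_conv.add h2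
    have he : ((fun x => G x - M / 2 * x ^ 2) + fun x : ℝ => M / 2 * x ^ 2) = G := by
      funext x
      show (G x - M / 2 * x ^ 2) + M / 2 * x ^ 2 = G x
      ring
    rwa [he] at h3
  -- derivative of the strongly convex part
  have hderiv_aux : ∀ x : ℝ, deriv (fun x => G x - M / 2 * x ^ 2) x = deriv G x - M * x := by
    intro x
    have h1 : HasDerivAt (fun x : ℝ => M / 2 * x ^ 2) (M / 2 * (2 * x)) x := by
      simpa using (hasDerivAt_pow 2 x).const_mul (M / 2)
    have h2 : HasDerivAt (fun x => G x - M / 2 * x ^ 2) (deriv G x - M / 2 * (2 * x)) x :=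
      (hG_diff x).hasDerivAt.sub h1
    rw [h2.deriv]; ring
  have hφmono : Monotone (fun x => deriv G x - M * x) := by
    have hd : ∀ x ∈ Set.univ, DifferentiableAt ℝ (fun x => G x - M / 2 * x ^ 2) x := by
      intro x _
      exact (hG_diff x).sub (by fun_prop)
    have := hG_conv.monotoneOn_deriv hd
    intro a b hab
    have h := this (Set.mem_univ a) (Set.mem_univ b) hab
    rwa [hderiv_aux, hderiv_aux] at h
  have hsm : StrictMono (deriv G) := by
    intro a b hab
    have h := hφmono hab.le
    simp only at h
    nlinarith
  have hsurj : Function.Surjective (deriv G) := by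
    intro y
    have hgrow : ∀ x : ℝ, 0 ≤ x → deriv G 0 + M * x ≤ deriv G x := by
      intro x hx
      have := hφmono hx
      simp only at this; linarith
    have hgrow' : ∀ x : ℝ, x ≤ 0 → deriv G x ≤ deriv G 0 + M * x := by
      intro x hx
      have := hφmono hx
      simp only at this; linarith
    set b := max 0 ((y - deriv G 0) / M) with hb
    set a := min 0 ((y - deriv G 0) / M) with ha
    have hab : a ≤ b := le_trans (min_le_left _ _) (le_max_left _ _)
    have hyb : y ≤ deriv G b := by
      have h1 : (y - deriv G 0) / M ≤ b := le_max_right _ _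
      have h2 := hgrow b (le_max_left _ _)
      have : y - deriv G 0 ≤ M * b := by
        rw [div_le_iff₀ hM] at h1; linarith [h1]
      linarith
    have hya : deriv G a ≤ y := by
      have h1 : a ≤ (y - deriv G 0) / M := min_le_right _ _
      have h2 := hgrow' a (min_le_left _ _)
      have : M * a ≤ y - deriv G 0 := by
        rw [le_div_iff₀ hM] at h1; linarith [h1]
      linarith
    have hdar := exists_hasDerivWithinAt_eq_of_ge_of_le (f := G) (f' := deriv G) hab
      (fun x _ => (hG_diff x).hasDerivAt.hasDerivWithinAt) hya hyb
    obtain ⟨c, _, hc⟩ := hdar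
    exact ⟨c, hc⟩
  have hrinv : ∀ y : ℝ, deriv G (Function.invFun (deriv G) y) = y :=
    fun y => Function.invFun_eq (hsurj y)
  have hlinv : ∀ x : ℝ, Function.invFun (deriv G) (deriv G x) = x :=
    Function.leftInverse_invFun hsm.injective
  -- deriv G 1 = 0
  have hd1 : deriv G 1 = 0 := by
    have hmin : IsLocalMin G 1 :=
      Filter.Eventually.of_forall fun x => by rw [hG_one]; exact hG_nonneg x
    exact hmin.deriv_eq_zero
  -- tangent line inequality for G
  have htan : ∀ x y : ℝ, G x + deriv G x * (y - x) ≤ G y := by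
    intro x y
    rcases lt_trichotomy x y with h | h | h
    · have h1 := hGconv.deriv_le_slope (Set.mem_univ x) (Set.mem_univ y) h (hG_diff x)
      rw [slope_def_field] at h1
      rw [le_div_iff₀ (by linarith)] at h1
      linarith
    · subst h; simp
    · have h1 := hGconv.slope_le_deriv (Set.mem_univ y) (Set.mem_univ x) h (hG_diff x)
      rw [slope_def_field] at h1
      rw [div_le_iff₀ (by linarith)] at h1
      linarith
  -- key pointwise inequality
  have hkey : ∀ c : ℝ,
      c ≤ max 0 (Function.invFun (deriv G) (c / lam)) * c
        - lam * G (max 0 (Function.invFun (deriv G) (c / lam))) := by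
    intro c
    set t := Function.invFun (deriv G) (c / lam) with ht
    set τ := max 0 t with hτ
    have htan1 := htan τ 1
    rw [hG_one] at htan1
    have hfac : (c - lam * deriv G τ) * (1 - τ) ≤ 0 := by
      rcases le_or_gt 0 t with h0 | h0
      · have : τ = t := max_eq_right h0
        rw [this, ht, hrinv]
        have : c - lam * (c / lam) = 0 := by field_simp; ring
        rw [this]; ring_nf; rfl
      · have hτ0 : τ = 0 := max_eq_left h0.le
        have h1 : deriv G t < deriv G 0 := hsm h0
        rw [ht, hrinv] at h1
        have h2 : c < lam * deriv G 0 := by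
          rw [div_lt_iff₀ hlam] at h1; linarith
        rw [hτ0]
        nlinarith
    nlinarith [mul_le_mul_of_nonneg_left htan1 hlam.le]
  -- invFun (deriv G) is monotone, hence measurable
  have hφinv_mono : Monotone (Function.invFun (deriv G)) := by
    intro a b hab
    by_contra h
    push_neg at h
    have := hsm h
    rw [hrinv, hrinv] at this
    linarith
  have hφinv_meas : Measurable (Function.invFun (deriv G)) := hφinv_mono.measurable
  have hG_meas : Measurable G := hG_diff.continuous.measurable
  -- actInt and bellOp: measurability and bounds
  have hact_meas : Measurable (actInt π qpi) := by
    have := hq_meas.stronglyMeasurable.integral_kernel_prod_right' (κ := π)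
    exact this.measurable
  have hact_bdd : ∀ s₀ : S, |actInt π qpi s₀| ≤ V := by
    intro s₀
    have h := norm_integral_le_of_norm_le_const (μ := π s₀) (C := V)
      (f := fun a => qpi (s₀, a))
      (Filter.Eventually.of_forall fun a => by
        rw [Real.norm_eq_abs]; exact hq_bdd (s₀, a))
    simpa [actInt, Real.norm_eq_abs, measure_univ] using h
  have hbell_bdd : ∀ x : S × A, |bellOp P π qpi x| ≤ V := by
    intro x
    have h := norm_integral_le_of_norm_le_const (μ := P x) (C := V)
      (f := fun s₀ => actInt π qpi s₀)
      (Filter.Eventually.of_forall fun s₀ => by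
        rw [Real.norm_eq_abs]; exact hact_bdd s₀)
    simpa [bellOp, Real.norm_eq_abs, measure_univ] using h
  have h1γ : (0:ℝ) < 1 - γ := by linarith
  -- part 1 : chat = 0
  have hchat : ∀ i ω, chat i ω = 0 := by
    intro i ω
    have := hBellman (sa i ω)
    simp only [chat]
    linarith
  -- part 2 : Gamps = 0
  have hφ0 : Function.invFun (deriv G) 0 = 1 := by
    have := hlinv 1
    rwa [hd1] at this
  have htaustar : ∀ i ω, taustar i ω = 1 := by
    intro i ω
    simp only [taustar, hchat i ω, zero_div, hφ0]
    exact max_eq_right zero_le_one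
  have hGamps : ∀ i ω, Gamps i ω = 0 := by
    intro i ω
    simp only [Gamps, htaustar i ω, hchat i ω, hG_one]
    ring
  refine ⟨hchat, hGamps, ?_⟩
  intro i
  haveI : IsFiniteMeasure (Pr.trim (hℱ i)) := isFiniteMeasure_trim _
  -- measurability of the data
  have hsaΩ : Measurable (sa i) := (hsa_meas i).mono (hℱ i) le_rfl
  have hctil_meas : Measurable (ctil i) := by
    apply Measurable.sub
    · exact (hrew_meas i).add ((hact_meas.comp (hs'_meas i)).const_mul γ)
    · exact hq_meas.comp hsaΩ
  have htau_meas : Measurable (tautil i) :=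
    measurable_const.max (hφinv_meas.comp (hctil_meas.div_const lam))
  have hGam_meas : Measurable (Gamtil i) :=
    (((htau_meas.mul hctil_meas).sub ((hG_meas.comp htau_meas).const_mul lam)).div_const (1 - γ))
  -- bounds
  set C₁ : ℝ := |Br| + V + V with hC₁
  have hC₁0 : 0 ≤ C₁ := by positivity
  set T : ℝ := max 0 (Function.invFun (deriv G) (C₁ / lam)) with hT
  have hT0 : 0 ≤ T := le_max_left _ _
  have hctil_bdd : ∀ᵐ ω ∂Pr, |ctil i ω| ≤ C₁ := by
    filter_upwards [hrew i] with ω hω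
    have h1 : |rew i ω| ≤ |Br| := by
      rw [hω]; exact (hr_bdd _).trans (le_abs_self Br)
    have h2 : |γ * actInt π qpi (s' i ω)| ≤ V := by
      rw [abs_mul, abs_of_nonneg hγ0]
      calc γ * |actInt π qpi (s' i ω)| ≤ 1 * V := by
            apply mul_le_mul hγ1.le (hact_bdd _) (abs_nonneg _) zero_le_one
        _ = V := one_mul V
    have h3 := hq_bdd (sa i ω)
    simp only [ctil]
    rw [hC₁]
    calc |rew i ω + γ * actInt π qpi (s' i ω) - qpi (sa i ω)|
        ≤ |rew i ω| + |γ * actInt π qpi (s' i ω)| + |qpi (sa i ω)| := by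
          have := abs_add_le (rew i ω + γ * actInt π qpi (s' i ω)) (-(qpi (sa i ω)))
          have h4 := abs_add_le (rew i ω) (γ * actInt π qpi (s' i ω))
          rw [abs_neg] at this
          calc |rew i ω + γ * actInt π qpi (s' i ω) - qpi (sa i ω)|
              = |rew i ω + γ * actInt π qpi (s' i ω) + -(qpi (sa i ω))| := by ring_nf
            _ ≤ |rew i ω + γ * actInt π qpi (s' i ω)| + |qpi (sa i ω)| := this
            _ ≤ |rew i ω| + |γ * actInt π qpi (s' i ω)| + |qpi (sa i ω)| := by linarith
      _ ≤ |Br| + V + V := by linarith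
  have hGam_bdd : ∀ᵐ ω ∂Pr, |Gamtil i ω| ≤ (T + 1) * C₁ / (1 - γ) := by
    filter_upwards [hctil_bdd] with ω hω
    have hτ0 : 0 ≤ tautil i ω := le_max_left _ _
    have hτT : tautil i ω ≤ T := by
      apply max_le_max le_rfl
      apply hφinv_mono
      exact (div_le_div_iff_of_pos_right hlam).mpr ((le_abs_self _).trans hω)
    have hlow : ctil i ω ≤ tautil i ω * ctil i ω - lam * G (tautil i ω) := hkey (ctil i ω)
    have hup : tautil i ω * ctil i ω - lam * G (tautil i ω) ≤ T * C₁ := by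
      have h1 : tautil i ω * ctil i ω ≤ T * C₁ := by
        calc tautil i ω * ctil i ω ≤ tautil i ω * C₁ := by
              apply mul_le_mul_of_nonneg_left ((le_abs_self _).trans hω) hτ0
          _ ≤ T * C₁ := mul_le_mul_of_nonneg_right hτT hC₁0
      have h2 : 0 ≤ lam * G (tautil i ω) := mul_nonneg hlam.le (hG_nonneg _)
      linarith
    have hlow2 : -C₁ ≤ tautil i ω * ctil i ω - lam * G (tautil i ω) := by
      have := neg_abs_le (ctil i ω)
      linarith
    rw [abs_le]
    constructor
    · simp only [Gamtil]
      rw [le_div_iff₀ h1γ, neg_mul, div_mul_cancel₀ _ h1γ.ne']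
      nlinarith
    · simp only [Gamtil]
      rw [div_le_div_iff_of_pos_right h1γ]
      nlinarith
  have hGam_int : Integrable (Gamtil i) Pr :=
    ⟨hGam_meas.aestronglyMeasurable,
      HasFiniteIntegral.of_bounded (C := (T + 1) * C₁ / (1 - γ))
        (by filter_upwards [hGam_bdd] with ω hω; simpa [Real.norm_eq_abs] using hω)⟩
  have hctil_int : Integrable (ctil i) Pr :=
    ⟨hctil_meas.aestronglyMeasurable,
      HasFiniteIntegral.of_bounded (C := C₁)
        (by filter_upwards [hctil_bdd] with ω hω; simpa [Real.norm_eq_abs] using hω)⟩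
  -- the difference function and the comparison function
  have hdiff_int : Integrable (fun ω => Gamps i ω - Gamtil i ω) Pr := by
    have : (fun ω => Gamps i ω - Gamtil i ω) = fun ω => -Gamtil i ω := by
      funext ω; rw [hGamps i ω]; ring
    rw [this]; exact hGam_int.neg
  have hg_int : Integrable (fun ω => (-(1 - γ)⁻¹) * ctil i ω) Pr := hctil_int.const_mul _
  have hle : (fun ω => Gamps i ω - Gamtil i ω) ≤ᵐ[Pr] fun ω => (-(1 - γ)⁻¹) * ctil i ω := by
    apply Filter.Eventually.of_forall
    intro ω
    show Gamps i ω - Gamtil i ω ≤ -(1 - γ)⁻¹ * ctil i ω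
    rw [hGamps i ω]
    have hdle : ctil i ω / (1 - γ) ≤ Gamtil i ω := by
      simp only [Gamtil]
      exact (div_le_div_iff_of_pos_right h1γ).mpr (hkey (ctil i ω))
    have he : -(1 - γ)⁻¹ * ctil i ω = -(ctil i ω / (1 - γ)) := by
      rw [div_eq_mul_inv]; ring
    linarith
  have hmono := condExp_mono (μ := Pr) (m := ℱ i) hdiff_int hg_int hle
  -- computing the conditional expectation of ctil
  have hf₁_meas : StronglyMeasurable[ℱ i] (fun ω => r (sa i ω)) :=
    (hr_meas.comp (hsa_meas i)).stronglyMeasurable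
  have hf₃_meas : StronglyMeasurable[ℱ i] (fun ω => qpi (sa i ω)) :=
    (hq_meas.comp (hsa_meas i)).stronglyMeasurable
  have hf₁_int : Integrable (fun ω => r (sa i ω)) Pr :=
    ⟨(hr_meas.comp hsaΩ).aestronglyMeasurable,
      HasFiniteIntegral.of_bounded (C := |Br|)
        (Filter.Eventually.of_forall fun ω => by
          simpa [Real.norm_eq_abs] using (hr_bdd (sa i ω)).trans (le_abs_self Br))⟩
  have hf₃_int : Integrable (fun ω => qpi (sa i ω)) Pr :=
    ⟨(hq_meas.comp hsaΩ).aestronglyMeasurable,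
      HasFiniteIntegral.of_bounded (C := V)
        (Filter.Eventually.of_forall fun ω => by
          simpa [Real.norm_eq_abs] using hq_bdd (sa i ω))⟩
  have hfB_int : Integrable (fun ω => γ * actInt π qpi (s' i ω)) Pr :=
    ⟨((hact_meas.comp (hs'_meas i)).const_mul γ).aestronglyMeasurable,
      HasFiniteIntegral.of_bounded (C := V)
        (Filter.Eventually.of_forall fun ω => by
          rw [Real.norm_eq_abs, abs_mul, abs_of_nonneg hγ0]
          calc γ * |actInt π qpi (s' i ω)| ≤ 1 * V :=
                mul_le_mul hγ1.le (hact_bdd _) (abs_nonneg _) zero_le_one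
            _ = V := one_mul V)⟩
  have hcf₁ : Pr[(fun ω => r (sa i ω))|ℱ i] =ᵐ[Pr] fun ω => r (sa i ω) :=
    (condExp_of_stronglyMeasurable (hℱ i) hf₁_meas hf₁_int).symm ▸
      Filter.EventuallyEq.refl _ _
  have hcf₃ : Pr[(fun ω => qpi (sa i ω))|ℱ i] =ᵐ[Pr] fun ω => qpi (sa i ω) := by
    rw [condExp_of_stronglyMeasurable (hℱ i) hf₃_meas hf₃_int]
  have hcfB : Pr[(fun ω => actInt π qpi (s' i ω))|ℱ i]
      =ᵐ[Pr] fun ω => bellOp P π qpi (sa i ω) := by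
    have := hcond i (actInt π qpi) hact_meas ⟨V, hact_bdd⟩
    exact this
  have hcctil : Pr[ctil i|ℱ i] =ᵐ[Pr] fun _ => (0:ℝ) := by
    have hsplit : ctil i =ᵐ[Pr]
        fun ω => (r (sa i ω) + γ * actInt π qpi (s' i ω)) - qpi (sa i ω) := by
      filter_upwards [hrew i] with ω hω
      simp only [ctil, hω]
    have h12_int : Integrable (fun ω => r (sa i ω) + γ * actInt π qpi (s' i ω)) Pr :=
      hf₁_int.add hfB_int
    calc Pr[ctil i|ℱ i]
        =ᵐ[Pr] Pr[(fun ω => (r (sa i ω) + γ * actInt π qpi (s' i ω)) - qpi (sa i ω))|ℱ i] :=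
          condExp_congr_ae hsplit
      _ =ᵐ[Pr] Pr[(fun ω => r (sa i ω) + γ * actInt π qpi (s' i ω))|ℱ i]
            - Pr[(fun ω => qpi (sa i ω))|ℱ i] := condExp_sub h12_int hf₃_int (ℱ i)
      _ =ᵐ[Pr] (Pr[(fun ω => r (sa i ω))|ℱ i] + Pr[(fun ω => γ * actInt π qpi (s' i ω))|ℱ i])
            - Pr[(fun ω => qpi (sa i ω))|ℱ i] := by
          filter_upwards [condExp_add (μ := Pr) (m := ℱ i) hf₁_int hfB_int] with ω hω
          simp only [Pi.sub_apply, Pi.add_apply]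
          have hω' : (Pr[(fun ω => r (sa i ω) + γ * actInt π qpi (s' i ω))|ℱ i]) ω
              = (Pr[(fun ω => r (sa i ω))|ℱ i]) ω
                + (Pr[(fun ω => γ * actInt π qpi (s' i ω))|ℱ i]) ω := hω
          rw [hω']
      _ =ᵐ[Pr] fun _ => (0:ℝ) := by
          have hsmul : Pr[(fun ω => γ * actInt π qpi (s' i ω))|ℱ i]
              =ᵐ[Pr] γ • Pr[(fun ω => actInt π qpi (s' i ω))|ℱ i] := by
            have := condExp_smul (μ := Pr) (m := ℱ i) γ (fun ω => actInt π qpi (s' i ω))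
            exact this
          filter_upwards [hcf₁, hcf₃, hcfB, hsmul] with ω h1 h3 hB hs
          simp only [Pi.sub_apply, Pi.add_apply]
          rw [h1, h3, hs]
          simp only [Pi.smul_apply, smul_eq_mul]
          rw [hB]
          have := hBellman (sa i ω)
          linarith
  -- conclude
  have hcg : Pr[(fun ω => (-(1 - γ)⁻¹) * ctil i ω)|ℱ i] =ᵐ[Pr] fun _ => (0:ℝ) := by
    have h1 : (fun ω => (-(1 - γ)⁻¹) * ctil i ω) = (-(1 - γ)⁻¹) • ctil i := by
      funext ω; simp [smul_eq_mul]
    rw [h1]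
    calc Pr[(-(1 - γ)⁻¹) • ctil i|ℱ i]
        =ᵐ[Pr] (-(1 - γ)⁻¹) • Pr[ctil i|ℱ i] := condExp_smul _ _ _
      _ =ᵐ[Pr] fun _ => (0:ℝ) := by
          filter_upwards [hcctil] with ω hω
          simp only [Pi.smul_apply, smul_eq_mul, hω, mul_zero]
  filter_upwards [hmono, hcg] with ω h1 h2
  exact le_trans h1 (le_of_eq h2)
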